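/- With the commutation relations δP_a − P_aδ = εP_b, P_a d − dP_a = P_b ε*, P_b ε P_b = P_b ε* P_b = 0, the antibasic Laplacian Δ_a = δ_a d_a + d_a δ_a (where d_a = P_a d, δ_a = δ P_a) satisfies Δ_a P_a = (Δ + δ P_b ε* + P_b ε* δ) P_a = P_a (Δ − ε P_b ε*) P_a, where Δ = dδ + δd is the ordinary Laplacian. -/
import Mathlib


/-- The antibasic Laplacian `Δ_a = δ_a d_a + d_a δ_a` (with `d_a = P_a d`,
`δ_a = δ P_a`) satisfies
`Δ_a P_a = (Δ + δ P_b ε* + P_b ε* δ) P_a = P_a (Δ − ε P_b ε*) P_a`,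
where `Δ = dδ + δd`, given the commutation relations
`δ P_a − P_a δ = ε P_b`, `P_a d − d P_a = P_b ε*`, and `P_b ε P_b = P_b ε* P_b = 0`. -/
theorem stmt_7 {V : Type*} [AddCommGroup V] [Module ℝ V]
    (d δ Pb ε ε' : V →ₗ[ℝ] V)
    (hd2 : d ∘ₗ d = 0) (hδ2 : δ ∘ₗ δ = 0)
    (hPb : Pb ∘ₗ Pb = Pb)
    (Pa : V →ₗ[ℝ] V) (hPa : Pa = LinearMap.id - Pb)
    (hc1 : δ ∘ₗ Pa - Pa ∘ₗ δ = ε ∘ₗ Pb)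
    (hc2 : Pa ∘ₗ d - d ∘ₗ Pa = Pb ∘ₗ ε')
    (hb : Pb ∘ₗ ε ∘ₗ Pb = 0) (hb' : Pb ∘ₗ ε' ∘ₗ Pb = 0)
    (da δa Δa Δ : V →ₗ[ℝ] V)
    (hda : da = Pa ∘ₗ d) (hδa : δa = δ ∘ₗ Pa)
    (hΔa : Δa = δa ∘ₗ da + da ∘ₗ δa)
    (hΔ : Δ = d ∘ₗ δ + δ ∘ₗ d) :
    Δa ∘ₗ Pa = (Δ + δ ∘ₗ Pb ∘ₗ ε' + Pb ∘ₗ ε' ∘ₗ δ) ∘ₗ Pa ∧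
    Δa ∘ₗ Pa = Pa ∘ₗ (Δ - ε ∘ₗ Pb ∘ₗ ε') ∘ₗ Pa := by
  subst hPa hda hδa hΔa hΔ
  simp only [← Module.End.mul_eq_comp, ← Module.End.one_eq_id] at *
  have h1 : δ * Pb = Pb * δ - ε * Pb := by rw [← hc1]; noncomm_ring
  have h2 : d * Pb = Pb * d + Pb * ε' := by rw [← hc2]; noncomm_ring
  have h1' : ∀ x : V →ₗ[ℝ] V, δ * (Pb * x) = Pb * (δ * x) - ε * (Pb * x) := by
    intro x; rw [← mul_assoc, h1]; noncomm_ring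
  have h2' : ∀ x : V →ₗ[ℝ] V, d * (Pb * x) = Pb * (d * x) + Pb * (ε' * x) := by
    intro x; rw [← mul_assoc, h2]; noncomm_ring
  have hPb' : ∀ x : V →ₗ[ℝ] V, Pb * (Pb * x) = Pb * x := by
    intro x; rw [← mul_assoc, hPb]
  have hbx : ∀ x : V →ₗ[ℝ] V, Pb * (ε * (Pb * x)) = 0 := by
    intro x
    have : Pb * ε * Pb = 0 := by rw [mul_assoc]; exact hb
    rw [← mul_assoc, ← mul_assoc, this, zero_mul]
  have hbx' : ∀ x : V →ₗ[ℝ] V, Pb * (ε' * (Pb * x)) = 0 := by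
    intro x
    have : Pb * ε' * Pb = 0 := by rw [mul_assoc]; exact hb'
    rw [← mul_assoc, ← mul_assoc, this, zero_mul]
  have hd' : ∀ x : V →ₗ[ℝ] V, d * (d * x) = 0 := by
    intro x; rw [← mul_assoc, hd2, zero_mul]
  have hδ' : ∀ x : V →ₗ[ℝ] V, δ * (δ * x) = 0 := by
    intro x; rw [← mul_assoc, hδ2, zero_mul]
  have lemA : Pb * (δ * (ε' * Pb)) = 0 := by
    have e : Pb * δ = δ * Pb + ε * Pb := by rw [h1]; noncomm_ring
    calc Pb * (δ * (ε' * Pb)) = (Pb * δ) * (ε' * Pb) := by rw [mul_assoc]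
    _ = δ * (Pb * (ε' * Pb)) + ε * (Pb * (ε' * Pb)) := by rw [e]; noncomm_ring
    _ = 0 := by rw [hb']; simp
  have lemB : Pb * (d * (ε * Pb)) = - (Pb * (ε' * (ε * Pb))) := by
    have e : Pb * d = d * Pb - Pb * ε' := by rw [h2]; noncomm_ring
    calc Pb * (d * (ε * Pb)) = (Pb * d) * (ε * Pb) := by rw [mul_assoc]
    _ = d * (Pb * (ε * Pb)) - Pb * (ε' * (ε * Pb)) := by rw [e]; noncomm_ring
    _ = - (Pb * (ε' * (ε * Pb))) := by rw [hb]; simp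
  constructor <;>
  · simp only [mul_sub, sub_mul, mul_add, add_mul, mul_one, one_mul, mul_assoc,
      h1, h2, h1', h2', hPb', hbx, hbx', hd', hδ', hd2, hδ2, hPb, hb, hb', lemA, lemB, neg_neg, mul_neg, neg_mul, smul_mul_assoc,
      mul_zero, zero_mul, sub_zero, zero_sub, add_zero, zero_add]
    abel
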